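/- Let c, y₄, z₄ ∈ ℂ with c ≠ 0, c³ ≠ 1, c³ ≠ −8, and z₄ ≠ 0. Set X = [[c·y₄²/(2z₄), 0], [0, −c·y₄²/(2z₄)]], Y = [[−y₄, −y₄·(8z₄³ + c³·y₄³)/(4z₄²)], [0, y₄]], and Z = [[−z₄, (y₄³ − z₄³)/z₄], [1, z₄]] in Mat₂(ℂ). Then (X, Y, Z) is a matrix solution for S(1,1,c), and it is irreducible if and only if y₄ ≠ 0. -/

import Mathlib

set_option maxHeartbeats 1000000 in
/-- The third representative family of Table 4 (two-Jordan-block case,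
normalized with z₃ = 1): a matrix solution of S(1,1,c), irreducible iff y₄ ≠ 0. -/
theorem table4_family3_solution_irreducible_iff
    (c y₄ z₄ : ℂ) (hc0 : c ≠ 0) (hc1 : c ^ 3 ≠ 1) (hc8 : c ^ 3 ≠ -8) (hz : z₄ ≠ 0) :
    let X : Matrix (Fin 2) (Fin 2) ℂ :=
      !![c * y₄ ^ 2 / (2 * z₄), 0; 0, -(c * y₄ ^ 2 / (2 * z₄))]
    let Y : Matrix (Fin 2) (Fin 2) ℂ :=
      !![-y₄, -(y₄ * (8 * z₄ ^ 3 + c ^ 3 * y₄ ^ 3) / (4 * z₄ ^ 2)); 0, y₄]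
    let Z : Matrix (Fin 2) (Fin 2) ℂ :=
      !![-z₄, (y₄ ^ 3 - z₄ ^ 3) / z₄; 1, z₄]
    (Y * Z + Z * Y + c • (X * X) = 0 ∧
     Z * X + X * Z + c • (Y * Y) = 0 ∧
     X * Y + Y * X + c • (Z * Z) = 0) ∧
    (Algebra.adjoin ℂ {X, Y, Z} = ⊤ ↔ y₄ ≠ 0) := by
  intro X Y Z
  constructor
  · simp only [X, Y, Z, Matrix.mul_fin_two, Matrix.smul_of, Matrix.smul_cons, smul_eq_mul,
      Matrix.smul_empty]
    refine ⟨?_, ?_, ?_⟩ <;>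
      · rw [show (0 : Matrix (Fin 2) (Fin 2) ℂ) = !![0,0;0,0] by
            ext i j; fin_cases i <;> fin_cases j <;> rfl]
        rw [← Matrix.ext_iff]
        intro i j
        fin_cases i <;> fin_cases j <;>
          · simp only [Matrix.add_apply, Matrix.cons_val', Matrix.cons_val_zero,
              Matrix.cons_val_one, Matrix.head_cons, Matrix.empty_val',
              Matrix.cons_val_fin_one, Matrix.head_fin_const, Matrix.of_apply, Fin.zero_eta,
              Fin.mk_one]
            field_simp
            try ring
  · constructor
    · intro htop hy0
      have hX0 : X = 0 := by ext i j; fin_cases i <;> fin_cases j <;> simp [X, hy0]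
      have hY0 : Y = 0 := by ext i j; fin_cases i <;> fin_cases j <;> simp [Y, hy0]
      have hcomm : ∀ a ∈ ({X, Y, Z} : Set (Matrix (Fin 2) (Fin 2) ℂ)),
          ∀ b ∈ ({X, Y, Z} : Set (Matrix (Fin 2) (Fin 2) ℂ)), a * b = b * a := by
        rintro a (rfl | rfl | rfl) b (rfl | rfl | rfl) <;> simp [hX0, hY0]
      letI := Algebra.adjoinCommSemiringOfComm ℂ hcomm
      have hA : (!![0,1;0,0] : Matrix (Fin 2) (Fin 2) ℂ) ∈ Algebra.adjoin ℂ {X, Y, Z} := by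
        rw [htop]; trivial
      have hB : (!![0,0;1,0] : Matrix (Fin 2) (Fin 2) ℂ) ∈ Algebra.adjoin ℂ {X, Y, Z} := by
        rw [htop]; trivial
      have hcm := mul_comm (⟨_, hA⟩ : Algebra.adjoin ℂ {X, Y, Z}) ⟨_, hB⟩
      have hcm' : (!![0,1;0,0] : Matrix (Fin 2) (Fin 2) ℂ) * !![0,0;1,0]
          = !![0,0;1,0] * !![0,1;0,0] := congrArg Subtype.val hcm
      have h00 := congrFun (congrFun hcm' 0) 0
      simp [Matrix.mul_apply, Fin.sum_univ_two] at h00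
    · intro hy
      set A := Algebra.adjoin ℂ ({X, Y, Z} : Set (Matrix (Fin 2) (Fin 2) ℂ)) with hA
      have hXA : X ∈ A := Algebra.subset_adjoin (by simp)
      have hYA : Y ∈ A := Algebra.subset_adjoin (by simp)
      have hZA : Z ∈ A := Algebra.subset_adjoin (by simp)
      set x : ℂ := c * y₄ ^ 2 / (2 * z₄) with hxdef
      have hx : x ≠ 0 := by
        simp only [hxdef, div_ne_zero_iff]
        exact ⟨mul_ne_zero hc0 (pow_ne_zero 2 hy), mul_ne_zero two_ne_zero hz⟩
      have hE11 : (!![1,0;0,0] : Matrix (Fin 2) (Fin 2) ℂ) ∈ A := by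
        have heq : (2 * x)⁻¹ • (X + x • 1) = !![1,0;0,0] := by
          ext i j
          fin_cases i <;> fin_cases j <;>
            · simp [X, Matrix.one_apply, ← hxdef]
              try field_simp
              try ring
        rw [← heq]
        exact A.smul_mem (A.add_mem hXA (A.smul_mem A.one_mem x)) _
      have hE22 : (!![0,0;0,1] : Matrix (Fin 2) (Fin 2) ℂ) ∈ A := by
        have heq : (1 : Matrix (Fin 2) (Fin 2) ℂ) - !![1,0;0,0] = !![0,0;0,1] := by
          ext i j; fin_cases i <;> fin_cases j <;> simp [Matrix.one_apply]
        rw [← heq]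
        exact A.sub_mem A.one_mem hE11
      have hE21 : (!![0,0;1,0] : Matrix (Fin 2) (Fin 2) ℂ) ∈ A := by
        have heq : (!![0,0;0,1] : Matrix (Fin 2) (Fin 2) ℂ) * Z * !![1,0;0,0]
            = !![0,0;1,0] := by
          ext i j
          fin_cases i <;> fin_cases j <;>
            simp [Z, Matrix.mul_apply, Fin.sum_univ_two]
        rw [← heq]
        exact A.mul_mem (A.mul_mem hE22 hZA) hE11
      have hE12 : (!![0,1;0,0] : Matrix (Fin 2) (Fin 2) ℂ) ∈ A := by
        by_cases hw : y₄ ^ 3 - z₄ ^ 3 = 0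
        · set v : ℂ := -(y₄ * (8 * z₄ ^ 3 + c ^ 3 * y₄ ^ 3) / (4 * z₄ ^ 2)) with hvdef
          have h8 : (8 : ℂ) + c ^ 3 ≠ 0 := by
            intro h; exact hc8 (by linear_combination h)
          have hz3 : z₄ ^ 3 = y₄ ^ 3 := by linear_combination -hw
          have hnum : 8 * z₄ ^ 3 + c ^ 3 * y₄ ^ 3 ≠ 0 := by
            intro h
            exact mul_ne_zero h8 (pow_ne_zero 3 hy) (by rw [hz3] at h; linear_combination h)
          have hv : v ≠ 0 := by
            simp only [hvdef, neg_ne_zero]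
            exact div_ne_zero (mul_ne_zero hy hnum)
              (mul_ne_zero (by norm_num) (pow_ne_zero 2 hz))
          have h1 : (!![1,0;0,0] : Matrix (Fin 2) (Fin 2) ℂ) * Y * !![0,0;0,1]
              = !![0, v; 0, 0] := by
            ext i j
            fin_cases i <;> fin_cases j <;>
              simp [Y, Matrix.mul_apply, Fin.sum_univ_two, hvdef]
          have heq : v⁻¹ • (!![0, v; 0, 0] : Matrix (Fin 2) (Fin 2) ℂ) = !![0,1;0,0] := by
            ext i j
            fin_cases i <;> fin_cases j <;> simp [inv_mul_cancel₀ hv]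
          rw [← heq, ← h1]
          exact A.smul_mem (A.mul_mem (A.mul_mem hE11 hYA) hE22) _
        · set w : ℂ := (y₄ ^ 3 - z₄ ^ 3) / z₄ with hwdef
          have hwne : w ≠ 0 := div_ne_zero hw hz
          have h1 : (!![1,0;0,0] : Matrix (Fin 2) (Fin 2) ℂ) * Z * !![0,0;0,1]
              = !![0, w; 0, 0] := by
            ext i j
            fin_cases i <;> fin_cases j <;>
              simp [Z, Matrix.mul_apply, Fin.sum_univ_two, hwdef]
          have heq : w⁻¹ • (!![0, w; 0, 0] : Matrix (Fin 2) (Fin 2) ℂ) = !![0,1;0,0] := by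
            ext i j
            fin_cases i <;> fin_cases j <;> simp [inv_mul_cancel₀ hwne]
          rw [← heq, ← h1]
          exact A.smul_mem (A.mul_mem (A.mul_mem hE11 hZA) hE22) _
      rw [eq_top_iff]
      intro M _
      have hM : M = M 0 0 • !![1,0;0,0] + M 0 1 • !![0,1;0,0]
          + M 1 0 • !![0,0;1,0] + M 1 1 • !![0,0;0,1] := by
        ext i j; fin_cases i <;> fin_cases j <;> simp
      rw [hM]
      exact A.add_mem (A.add_mem (A.add_mem (A.smul_mem hE11 _) (A.smul_mem hE12 _))
        (A.smul_mem hE21 _)) (A.smul_mem hE22 _)
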